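/- Let p be a binary path of length L with strictly more 0s than 1s (λ_1 > λ_2), with rigged configuration (ν, J), where λ_2 = |ν|. Then for every i with 1 ≤ i < ν_1 (i.e., for every row length strictly less than the longest), the vacancy number is strictly positive: P_i(ν) = L − 2Q_i(ν) > 0, where Q_i(ν) = Σ_a min(i, ν_a). Moreover P_{ν_1}(ν) ≥ L − 2λ_2 ≥ 0. -/

import Mathlib

/-- `Q_i(ν) = Σ_a min(i, ν_a)`, where the configuration is recorded as a list
of (row length, rigging) pairs. -/
def Qcfg (ν : List (ℕ × ℤ)) (i : ℕ) : ℤ := (ν.map (fun r => (min i r.1 : ℤ))).sum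

/-- One step of the `A₁⁽¹⁾` rigged configuration bijection: processing the
letter `a` at (1-indexed) position `b` of the path, with `prev` the previous
letter.  A letter 0 does nothing; a letter 1 preceded by 0 creates a new
length-1 string with rigging `b - 2(ℓ(ν)+1)`; a letter 1 preceded by 1 adds a
box to a longest singular string (a row `(i, J)` with `J = (b-1) - 2 Q_i(ν)`,
the vacancy number of the length `b-1` prefix), the new rigging being
`b - 2 Σ_j min(i+1, ν_j)`. -/
def rcStep (b : ℕ) (prev : Bool) (a : Bool) (ν : List (ℕ × ℤ)) : List (ℕ × ℤ) :=
  if a = false then ν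
  else if prev = false then
    ((1 : ℕ), (b : ℤ) - 2 * ((ν.length : ℤ) + 1)) :: ν
  else
    match ((ν.filter (fun r => decide (r.2 = (b : ℤ) - 1 - 2 * Qcfg ν r.1))).map
        Prod.fst).max? with
    | none => ν
    | some i =>
      let ν' := ν.erase (i, (b : ℤ) - 1 - 2 * Qcfg ν i)
      ((i + 1 : ℕ), (b : ℤ) - 2 * (Qcfg ν' (i + 1) + ((i : ℤ) + 1))) :: ν'

def rcAux : ℕ → Bool → List Bool → List (ℕ × ℤ) → List (ℕ × ℤ)
  | _, _, [], ν => ν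
  | b, prev, a :: rest, ν => rcAux (b + 1) a rest (rcStep b prev a ν)

/-- The `A₁⁽¹⁾` rigged configuration bijection applied to a binary path
(`true` = 1, `false` = 0), returning the list of (row length, rigging) pairs. -/
def rcBij (p : List Bool) : List (ℕ × ℤ) := rcAux 1 false p []

lemma cast_sum_fst (ν : List (ℕ × ℤ)) :
    ((ν.map Prod.fst).sum : ℤ) = (ν.map fun r => (r.1 : ℤ)).sum := by
  induction ν with
  | nil => simp
  | cons r t ih => simp [ih]

lemma Qcfg_le (ν : List (ℕ × ℤ)) (i : ℕ) :
    Qcfg ν i ≤ ((ν.map Prod.fst).sum : ℤ) := by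
  rw [cast_sum_fst]
  exact List.sum_le_sum (fun r _ => by exact_mod_cast Nat.min_le_right i r.1)

lemma Qcfg_lt (ν : List (ℕ × ℤ)) (i : ℕ) (hx : ∃ r ∈ ν, i < r.1) :
    Qcfg ν i + 1 ≤ ((ν.map Prod.fst).sum : ℤ) := by
  induction ν with
  | nil => simp at hx
  | cons r t ih =>
    simp only [Qcfg, List.map_cons, List.sum_cons] at *
    rcases hx with ⟨s, hs, hlt⟩
    rcases List.mem_cons.1 hs with rfl | hs
    · have h1 : (i : ℤ) ⊓ (s.1 : ℤ) + 1 ≤ (s.1 : ℤ) := by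
        rw [min_eq_left (by exact_mod_cast hlt.le : (i : ℤ) ≤ (s.1 : ℤ))]
        exact_mod_cast hlt
      have h2 := Qcfg_le t i
      simp only [Qcfg] at h2
      push_cast
      push_cast at h2
      linarith
    · have h1 : (min i r.1 : ℤ) ≤ (r.1 : ℤ) := by exact_mod_cast Nat.min_le_right i r.1
      have h2 := ih ⟨s, hs, hlt⟩
      push_cast at h1 h2 ⊢
      linarith

lemma perm_cons_erase' {x : ℕ × ℤ} : ∀ {l : List (ℕ × ℤ)}, x ∈ l → l.Perm (x :: l.erase x)
  | a :: t, hx => by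
    by_cases h : a = x
    · subst h
      rw [List.erase_cons_head]
    · have hxt : x ∈ t := by
        rcases List.mem_cons.1 hx with h' | h'
        · exact absurd h'.symm h
        · exact h'
      rw [List.erase_cons_tail (by simpa using h)]
      exact (List.Perm.cons a (perm_cons_erase' hxt)).trans (List.Perm.swap x a _)

lemma sum_rcStep (b : ℕ) (prev a : Bool) (ν : List (ℕ × ℤ)) :
    ((rcStep b prev a ν).map Prod.fst).sum ≤ (ν.map Prod.fst).sum + (if a then 1 else 0) := by
  unfold rcStep
  cases a with
  | false => simp
  | true =>
    cases prev with
    | false => simp; omega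
    | true =>
      simp only [Bool.true_eq_false, if_false, if_true]
      rcases hm : ((ν.filter (fun r => decide (r.2 = (b : ℤ) - 1 - 2 * Qcfg ν r.1))).map
          Prod.fst).max? with _ | i
      · rw [hm]; simp
      · rw [hm]
        have hi := List.max?_mem hm
        rcases List.mem_map.1 hi with ⟨r, hr, hr1⟩
        have hrν := List.mem_filter.1 hr
        have hmem : (i, (b : ℤ) - 1 - 2 * Qcfg ν i) ∈ ν := by
          have h2 : r.2 = (b : ℤ) - 1 - 2 * Qcfg ν r.1 := of_decide_eq_true hrν.2
          obtain ⟨r1, r2⟩ := r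
          simp only at hr1 h2
          subst hr1; subst h2
          exact hrν.1
        have hperm := perm_cons_erase' hmem
        have hsum : (ν.map Prod.fst).sum
            = i + ((ν.erase (i, (b : ℤ) - 1 - 2 * Qcfg ν i)).map Prod.fst).sum := by
          have := (hperm.map Prod.fst).sum_eq
          simpa using this
        simp only [List.map_cons, List.sum_cons]
        omega

lemma sum_rcAux (rest : List Bool) : ∀ (b : ℕ) (prev : Bool) (ν : List (ℕ × ℤ)),
    ((rcAux b prev rest ν).map Prod.fst).sum ≤ (ν.map Prod.fst).sum + rest.count true := by
  induction rest with
  | nil => intro b prev ν; simp [rcAux]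
  | cons a rest ih =>
    intro b prev ν
    have h1 := ih (b + 1) a (rcStep b prev a ν)
    have h2 := sum_rcStep b prev a ν
    have h3 : (a :: rest).count true = rest.count true + (if a then 1 else 0) := by
      cases a <;> simp [List.count_cons]
    rw [rcAux, h3]
    omega

lemma sum_rcBij (p : List Bool) :
    ((rcBij p).map Prod.fst).sum ≤ p.count true := by
  have := sum_rcAux p 1 false []
  simpa [rcBij] using this

lemma count_split (p : List Bool) : p.length = p.count true + p.count false := by
  induction p with
  | nil => rfl
  | cons a t ih =>
    rw [List.length_cons, List.count_cons, List.count_cons, ih]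
    cases a <;> simp <;> omega

/-- Lemma 3.9 of Kuniba–Takagi–Takenouchi: for a path with strictly more 0s
than 1s, the vacancy numbers `P_i(ν) = L - 2 Q_i(ν)` are strictly positive
for every `1 ≤ i < ν₁`, and `P_{ν₁}(ν) ≥ L - 2λ₂ ≥ 0`. -/
theorem stmt15 (p : List Bool) (h : p.count true < p.count false) :
    (∀ i : ℕ, 1 ≤ i → (∃ r ∈ rcBij p, i < r.1) →
      0 < (p.length : ℤ) - 2 * Qcfg (rcBij p) i)
    ∧ ∀ i : ℕ, (∃ r ∈ rcBij p, r.1 = i) → (∀ r ∈ rcBij p, r.1 ≤ i) →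
        (p.length : ℤ) - 2 * (p.count true : ℤ)
            ≤ (p.length : ℤ) - 2 * Qcfg (rcBij p) i
        ∧ 0 ≤ (p.length : ℤ) - 2 * (p.count true : ℤ) := by
  constructor
  · intro i _ hx
    have h1 := Qcfg_lt (rcBij p) i hx
    have h2 := sum_rcBij p
    have h3 := count_split p
    have h2' : (((rcBij p).map Prod.fst).sum : ℤ) ≤ (p.count true : ℤ) := by exact_mod_cast h2
    have h3' : (p.length : ℤ) = (p.count true : ℤ) + (p.count false : ℤ) := by exact_mod_cast h3
    have h4 : (p.count true : ℤ) < (p.count false : ℤ) := by exact_mod_cast h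
    linarith
  · intro i _ _
    have h1 := Qcfg_le (rcBij p) i
    have h2 := sum_rcBij p
    have h3 := count_split p
    have h2' : (((rcBij p).map Prod.fst).sum : ℤ) ≤ (p.count true : ℤ) := by exact_mod_cast h2
    have h3' : (p.length : ℤ) = (p.count true : ℤ) + (p.count false : ℤ) := by exact_mod_cast h3
    have h4 : (p.count true : ℤ) < (p.count false : ℤ) := by exact_mod_cast h
    constructor <;> linarith
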